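/- Let C = {x ∈ ℝⁿ : fᵢ(x) ≥ 0 for all i ∈ I} be a full-dimensional polyhedral cone given by a finite irredundant family of linear functionals (fᵢ)_{i∈I}, i.e. each Fᵢ = {x ∈ C : fᵢ(x) = 0} is a facet of C and no fᵢ is a nonnegative combination of the others. Let j, k ∈ I be distinct with F_j ≠ F_k. Then F_j and F_k are NOT adjacent (i.e. dim(F_j ∩ F_k) < n − 2) if and only if there exist λᵢ ≥ 0 for i ∈ I∖{j,k} and λ_j > 0, λ_k > 0 such that Σ_{i ∈ I∖{j,k}} λᵢ fᵢ = λ_j f_j + λ_k f_k. -/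

import Mathlib

/-- A polyhedral cone in `ℝⁿ`: the solution set of finitely many
linear inequalities `fᵢ(x) ≥ 0`. -/
def IsPolyhedralCone {n : ℕ} (C : Set (Fin n → ℝ)) : Prop :=
  ∃ (m : ℕ) (f : Fin m → ((Fin n → ℝ) →ₗ[ℝ] ℝ)), C = {x | ∀ i, 0 ≤ f i x}

/-- `F` is a face of `C`: there is a linear functional nonnegative on `C`
whose zero set in `C` is `F`. -/
def IsFaceOf {n : ℕ} (C F : Set (Fin n → ℝ)) : Prop :=
  ∃ f : (Fin n → ℝ) →ₗ[ℝ] ℝ, (∀ x ∈ C, 0 ≤ f x) ∧ F = {x ∈ C | f x = 0}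

/-- The dimension of a face: the dimension of its linear span. -/
noncomputable def faceDim {n : ℕ} (F : Set (Fin n → ℝ)) : ℕ :=
  Module.finrank ℝ (Submodule.span ℝ F)

/-- A cone is salient (pointed) if `C ∩ (−C) = {0}`. -/
def IsSalient {n : ℕ} (C : Set (Fin n → ℝ)) : Prop :=
  ∀ x ∈ C, -x ∈ C → x = 0


open Module Finset
open scoped InnerProductSpace

section ConeAux
variable {H : Type*} [NormedAddCommGroup H] [InnerProductSpace ℝ H] [FiniteDimensional ℝ H]
variable {ι : Type*} [Fintype ι] [DecidableEq ι]

set_option linter.unusedSectionVars false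

/-- Conic Carathéodory: every nonneg combination is a nonneg combination over a
linearly independent subfamily. -/
lemma conic_caratheodory (v : ι → H) (T : Finset ι) :
    ∀ (c : ι → ℝ), (∀ i, 0 ≤ c i) →
    ∃ (T' : Finset ι) (d : ι → ℝ), T' ⊆ T ∧
      LinearIndependent ℝ (fun i : T' => v i) ∧ (∀ i, 0 ≤ d i) ∧
      ∑ i ∈ T', d i • v i = ∑ i ∈ T, c i • v i := by
  induction T using Finset.strongInduction with
  | _ T ih =>
    intro c hc
    by_cases hli : LinearIndependent ℝ (fun i : T => v i)
    · exact ⟨T, c, le_refl _, hli, hc, rfl⟩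
    · obtain ⟨g, hg0, i₀, hgi₀⟩ := Fintype.not_linearIndependent_iff.mp hli
      set gg : ι → ℝ := fun i => if h : i ∈ T then g ⟨i, h⟩ else 0 with hgg
      have hggsum : ∑ i ∈ T, gg i • v i = 0 := by
        rw [← hg0, ← Finset.sum_attach T (fun i => gg i • v i)]
        apply Finset.sum_congr rfl
        intro x _
        simp [hgg, x.2]
      have key : ∀ e : ι → ℝ, (∀ i ∉ T, e i = 0) → (∑ i ∈ T, e i • v i = 0) →
          (∃ i ∈ T, 0 < e i) →
          ∃ (T' : Finset ι) (d : ι → ℝ), T' ⊆ T ∧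
            LinearIndependent ℝ (fun i : T' => v i) ∧ (∀ i, 0 ≤ d i) ∧
            ∑ i ∈ T', d i • v i = ∑ i ∈ T, c i • v i := by
        rintro e he0 hesum ⟨ip, hipT, hip⟩
        set P : Finset ι := T.filter (fun i => 0 < e i) with hP
        have hPne : P.Nonempty := ⟨ip, Finset.mem_filter.mpr ⟨hipT, hip⟩⟩
        obtain ⟨i₁, hi₁P, hi₁min⟩ := Finset.exists_min_image P (fun i => c i / e i) hPne
        have hi₁T : i₁ ∈ T := (Finset.mem_filter.mp hi₁P).1
        have hei₁ : 0 < e i₁ := (Finset.mem_filter.mp hi₁P).2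
        set t : ℝ := c i₁ / e i₁ with ht
        have ht0 : 0 ≤ t := div_nonneg (hc i₁) hei₁.le
        set c' : ι → ℝ := fun i => c i - t * e i with hc'
        have hc'0 : ∀ i, 0 ≤ c' i := by
          intro i
          by_cases hiT : i ∈ T
          · by_cases hie : 0 < e i
            · have hmin := hi₁min i (Finset.mem_filter.mpr ⟨hiT, hie⟩)
              have : t * e i ≤ c i := by
                rw [ht]
                calc c i₁ / e i₁ * e i ≤ c i / e i * e i := by
                      apply mul_le_mul_of_nonneg_right hmin hie.le
                  _ = c i := div_mul_cancel₀ _ hie.ne'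
              simp only [hc']; linarith
            · push_neg at hie
              have h1 : t * e i ≤ 0 := mul_nonpos_of_nonneg_of_nonpos ht0 hie
              have h2 := hc i
              simp only [hc']; linarith
          · simp only [hc', he0 i hiT, mul_zero, sub_zero]; exact hc i
        have hc'i₁ : c' i₁ = 0 := by
          simp only [hc', ht]
          field_simp
          ring
        have hsum' : ∑ i ∈ T.erase i₁, c' i • v i = ∑ i ∈ T, c i • v i := by
          rw [Finset.sum_erase _ (by rw [hc'i₁, zero_smul])]
          have hcong : ∀ i ∈ T, c' i • v i = c i • v i - t • (e i • v i) := by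
            intro i _
            simp only [hc', sub_smul, smul_smul]
          rw [Finset.sum_congr rfl hcong, Finset.sum_sub_distrib, ← Finset.smul_sum,
            hesum, smul_zero, sub_zero]
        obtain ⟨T', d, hT'sub, hT'li, hd0, hdsum⟩ :=
          ih (T.erase i₁) (Finset.erase_ssubset hi₁T) c' hc'0
        exact ⟨T', d, hT'sub.trans (Finset.erase_subset _ _), hT'li, hd0,
          by rw [hdsum, hsum']⟩
      rcases lt_or_ge 0 (g i₀) with hpos | hneg
      · exact key gg (fun i hi => by simp [hgg, hi]) hggsum
          ⟨i₀, i₀.2, by simpa [hgg, i₀.2] using hpos⟩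
      · have hneg' : 0 < -g i₀ := by
          rcases lt_or_eq_of_le hneg with h | h
          · linarith
          · exact absurd h hgi₀
        refine key (-gg) (fun i hi => by simp [hgg, hi]) ?_
          ⟨i₀, i₀.2, by simpa [hgg, i₀.2] using hneg'⟩
        simp only [Pi.neg_apply, neg_smul, Finset.sum_neg_distrib, hggsum, neg_zero]

/-- The linear map sending coefficients to the corresponding combination. -/
noncomputable def combMap (u : ι → H) : (ι → ℝ) →ₗ[ℝ] H where
  toFun c := ∑ i, c i • u i
  map_add' a b := by simp [add_smul, Finset.sum_add_distrib]
  map_smul' r a := by simp [smul_smul, Finset.smul_sum]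

lemma isClosed_coneSet (v : ι → H) :
    IsClosed {x : H | ∃ c : ι → ℝ, (∀ i, 0 ≤ c i) ∧ x = ∑ i, c i • v i} := by
  classical
  have main : {x : H | ∃ c : ι → ℝ, (∀ i, 0 ≤ c i) ∧ x = ∑ i, c i • v i} =
      ⋃ (T : Finset ι), (if LinearIndependent ℝ (fun i : T => v i) then
        (combMap (fun i : T => v i)) '' {c | ∀ i, 0 ≤ c i} else ∅) := by
    ext x
    simp only [Set.mem_setOf_eq, Set.mem_iUnion]
    constructor
    · rintro ⟨c, hc0, rfl⟩
      obtain ⟨T', d, -, hli, hd0, hsum⟩ := conic_caratheodory v Finset.univ c hc0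
      refine ⟨T', ?_⟩
      rw [if_pos hli]
      refine ⟨fun i : T' => d i, fun i => hd0 i, ?_⟩
      show ∑ i : T', d i • v i = _
      rw [Finset.sum_coe_sort T' (fun i => d i • v i)]
      exact hsum
    · rintro ⟨T, hx⟩
      by_cases hli : LinearIndependent ℝ (fun i : T => v i)
      · rw [if_pos hli] at hx
        obtain ⟨d, hd0, rfl⟩ := hx
        refine ⟨fun i => if h : i ∈ T then d ⟨i, h⟩ else 0, ?_, ?_⟩
        · intro i; by_cases h : i ∈ T <;> simp [h, hd0 _]
        · show combMap _ d = _
          simp only [combMap, LinearMap.coe_mk, AddHom.coe_mk]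
          have h1 : ∑ x ∈ T, (if h : x ∈ T then d ⟨x, h⟩ else 0) • v x
              = ∑ x : ι, (if h : x ∈ T then d ⟨x, h⟩ else 0) • v x :=
            Finset.sum_subset (Finset.subset_univ T) (fun i _ hiT => by simp [hiT])
          rw [← h1, ← Finset.sum_coe_sort T
            (fun i => (if h : i ∈ T then d ⟨i, h⟩ else 0) • v i)]
          apply Finset.sum_congr rfl
          intro x _
          simp [x.2]
      · rw [if_neg hli] at hx
        exact absurd hx (Set.notMem_empty x)
  rw [main]
  apply isClosed_iUnion_of_finite
  intro T
  by_cases hli : LinearIndependent ℝ (fun i : T => v i)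
  · rw [if_pos hli]
    have hker : LinearMap.ker (combMap (fun i : T => v i)) = ⊥ := by
      rw [LinearMap.ker_eq_bot']
      intro m hm
      have := Fintype.linearIndependent_iff.mp hli m hm
      funext i
      exact this i
    have hclosed : IsClosed {c : T → ℝ | ∀ i, 0 ≤ c i} := by
      have heq : {c : T → ℝ | ∀ i, 0 ≤ c i} = ⋂ i, (fun c : T → ℝ => c i) ⁻¹' Set.Ici 0 := by
        ext c; simp [Set.mem_iInter]
      rw [heq]
      exact isClosed_iInter fun i => isClosed_Ici.preimage (continuous_apply i)
    exact ((combMap (fun i : T => v i)).isClosedEmbedding_of_injective hker).isClosedMap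
      _ hclosed
  · rw [if_neg hli]; exact isClosed_empty

lemma cone_farkas (v : ι → H) (g : H)
    (h : ¬ ∃ c : ι → ℝ, (∀ i, 0 ≤ c i) ∧ g = ∑ i, c i • v i) :
    ∃ y : H, (∀ i, 0 ≤ ⟪v i, y⟫_ℝ) ∧ ⟪g, y⟫_ℝ < 0 := by
  haveI : CompleteSpace H := FiniteDimensional.complete ℝ H
  set K : ConvexCone ℝ H :=
    { carrier := {x : H | ∃ c : ι → ℝ, (∀ i, 0 ≤ c i) ∧ x = ∑ i, c i • v i}
      smul_mem' := by
        rintro t ht x ⟨c, hc0, rfl⟩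
        exact ⟨fun i => t * c i, fun i => mul_nonneg ht.le (hc0 i),
          by rw [Finset.smul_sum]; simp [smul_smul]⟩
      add_mem' := by
        rintro x ⟨c, hc0, rfl⟩ y ⟨d, hd0, rfl⟩
        exact ⟨fun i => c i + d i, fun i => add_nonneg (hc0 i) (hd0 i),
          by simp [add_smul, Finset.sum_add_distrib]⟩ } with hK
  have hne : (K : Set H).Nonempty := ⟨0, ⟨fun _ => 0, fun i => le_refl _, by simp⟩⟩
  have hcl : IsClosed (K : Set H) := isClosed_coneSet v
  have hg : g ∉ K := h
  obtain ⟨y, hy1, hy2⟩ :=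
    ProperCone.hyperplane_separation' (⟨K.toPointedCone
      (ConvexCone.Pointed.of_nonempty_of_isClosed hne hcl), hcl⟩ : ProperCone ℝ H) hg
  refine ⟨y, fun i => ?_, hy2⟩
  apply hy1
  show ∃ c : ι → ℝ, (∀ l, 0 ≤ c l) ∧ v i = ∑ l, c l • v l
  refine ⟨fun l => if l = i then 1 else 0, fun l => by positivity, ?_⟩
  simp [ite_smul]

end ConeAux

variable {n : ℕ}

/-- The vector in Euclidean space representing a linear functional on `ℝⁿ`. -/
noncomputable def vecOf (f : (Fin n → ℝ) →ₗ[ℝ] ℝ) : EuclideanSpace ℝ (Fin n) :=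
  WithLp.toLp 2 (fun l => f (fun m => if l = m then 1 else 0))

lemma inner_vecOf (f : (Fin n → ℝ) →ₗ[ℝ] ℝ) (x : EuclideanSpace ℝ (Fin n)) :
    ⟪vecOf f, x⟫_ℝ = f x := by
  rw [PiLp.inner_apply]
  rw [LinearMap.pi_apply_eq_sum_univ f x]
  simp [vecOf, RCLike.inner_apply, smul_eq_mul, mul_comm]

lemma ker_le_ker_mult {f g : (Fin n → ℝ) →ₗ[ℝ] ℝ} (hf : f ≠ 0)
    (h : LinearMap.ker f ≤ LinearMap.ker g) : ∃ c : ℝ, g = c • f := by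
  obtain ⟨z, hz⟩ : ∃ z, f z ≠ 0 := by
    by_contra hc
    push_neg at hc
    exact hf (LinearMap.ext fun x => by simp [hc x])
  refine ⟨g z / f z, LinearMap.ext fun x => ?_⟩
  have hmem : x - (f x / f z) • z ∈ LinearMap.ker f := by
    simp [LinearMap.mem_ker, map_sub, map_smul, div_mul_cancel₀ _ hz]
  have := h hmem
  simp only [LinearMap.mem_ker, map_sub, map_smul, smul_eq_mul] at this
  have hgx : g x = f x / f z * g z := by linarith
  simp only [LinearMap.smul_apply, smul_eq_mul, hgx]
  field_simp

set_option maxHeartbeats 1000000 in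
/-- for a full-dimensional polyhedral cone given by an
irredundant family of facet-inducing functionals, two distinct facets
`F j`, `F k` are NOT adjacent iff `λ_j f_j + λ_k f_k` is a nonnegative
combination of the other `f_i`'s for some `λ_j, λ_k > 0`. -/
theorem facets_not_adjacent_iff_combination {n p : ℕ}
    (f : Fin p → ((Fin n → ℝ) →ₗ[ℝ] ℝ))
    (C : Set (Fin n → ℝ)) (hC : C = {x | ∀ i, 0 ≤ f i x})
    (hfull : Submodule.span ℝ C = ⊤)
    (F : Fin p → Set (Fin n → ℝ)) (hF : ∀ i, F i = {x ∈ C | f i x = 0})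
    (hfacet : ∀ i, faceDim (F i) = n - 1)
    (hirred : ∀ i, ¬ ∃ mu : Fin p → ℝ, (∀ l, 0 ≤ mu l) ∧
      f i = ∑ l ∈ Finset.univ.erase i, mu l • f l)
    (j k : Fin p) (hjk : j ≠ k) (hFjk : F j ≠ F k) :
    faceDim (F j ∩ F k) < n - 2 ↔
      ∃ lam : Fin p → ℝ, (∀ i, i ≠ j → i ≠ k → 0 ≤ lam i) ∧
        0 < lam j ∧ 0 < lam k ∧
        ∑ i ∈ (Finset.univ.erase j).erase k, lam i • f i =
          lam j • f j + lam k • f k := by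
  classical
  have hCmem : ∀ x, x ∈ C ↔ ∀ i, 0 ≤ f i x := fun x => by rw [hC]; rfl
  have hFmem : ∀ i x, x ∈ F i ↔ x ∈ C ∧ f i x = 0 := fun i x => by rw [hF i]; rfl
  have hn : 1 ≤ n := by
    by_contra hn
    push_neg at hn
    have hn0 : n = 0 := by omega
    subst hn0
    apply hFjk
    have hz : ∀ (g : (Fin 0 → ℝ) →ₗ[ℝ] ℝ) (v : Fin 0 → ℝ), g v = 0 := fun g v => by
      rw [show v = 0 from funext fun i => i.elim0]; exact map_zero g
    ext x
    rw [hFmem, hFmem]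
    simp [hz]
  have hfne : ∀ i, f i ≠ 0 := by
    intro i h0
    have hFi : F i = C := by
      ext x; rw [hFmem, h0]; simp
    have hdim : faceDim (F i) = n := by
      unfold faceDim
      rw [hFi, hfull, finrank_top, Module.finrank_pi, Fintype.card_fin]
    rw [hfacet i] at hdim
    omega
  -- interior point
  obtain ⟨x₀, hx₀C, hx₀pos⟩ : ∃ x₀, x₀ ∈ C ∧ ∀ i, 0 < f i x₀ := by
    have hex : ∀ i, ∃ y, y ∈ C ∧ 0 < f i y := by
      intro i
      by_contra hcon
      push_neg at hcon
      have hsub : C ⊆ (LinearMap.ker (f i) : Set (Fin n → ℝ)) := fun y hy => by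
        have h1 := (hCmem y).mp hy i
        have h2 := hcon y hy
        simpa [LinearMap.mem_ker] using le_antisymm h2 h1
      have hle : Submodule.span ℝ C ≤ LinearMap.ker (f i) := Submodule.span_le.mpr hsub
      rw [hfull] at hle
      exact hfne i (LinearMap.ker_eq_top.mp (top_le_iff.mp hle))
    choose y hyC hypos using hex
    refine ⟨∑ i, y i, ?_, ?_⟩
    · rw [hCmem]; intro l; rw [map_sum]
      exact Finset.sum_nonneg fun i _ => (hCmem _).mp (hyC i) l
    · intro l; rw [map_sum]
      exact Finset.sum_pos' (fun i _ => (hCmem _).mp (hyC i) l)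
        ⟨l, Finset.mem_univ l, hypos l⟩
  have hkerdim : ∀ i, finrank ℝ (LinearMap.ker (f i)) = n - 1 := by
    intro i
    have h1 := LinearMap.finrank_range_add_finrank_ker (f i)
    have hle : finrank ℝ (LinearMap.range (f i)) ≤ 1 := by
      simpa using Submodule.finrank_le (LinearMap.range (f i))
    have hne' : LinearMap.range (f i) ≠ ⊥ := by
      rw [ne_eq, LinearMap.range_eq_bot]; exact hfne i
    have hne0 : finrank ℝ (LinearMap.range (f i)) ≠ 0 := by
      rw [ne_eq, Submodule.finrank_eq_zero]; exact hne'
    have hpin : finrank ℝ (Fin n → ℝ) = n := by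
      rw [Module.finrank_pi, Fintype.card_fin]
    omega
  have hspanF : ∀ i, Submodule.span ℝ (F i) = LinearMap.ker (f i) := by
    intro i
    apply Submodule.eq_of_le_of_finrank_le
    · rw [Submodule.span_le]
      intro x hx
      rw [hFmem] at hx
      simpa [LinearMap.mem_ker] using hx.2
    · have hh := hfacet i
      unfold faceDim at hh
      rw [hkerdim i]
      omega
  have hnotprop : ∀ i l, i ≠ l → ¬ ∃ c : ℝ, f i = c • f l := by
    rintro i l hil ⟨c, hc⟩
    rcases le_or_gt c 0 with h | h
    · have h1 := hx₀pos i
      have h2 := hx₀pos l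
      have h3 : f i x₀ = c * f l x₀ := by rw [hc]; simp
      nlinarith
    · apply hirred i
      refine ⟨fun m => if m = l then c else 0, fun m => ?_, ?_⟩
      · dsimp only; split
        · exact h.le
        · exact le_refl 0
      · rw [hc, Finset.sum_eq_single l]
        · simp
        · intro b _ hbl; simp [hbl]
        · intro hl
          exact absurd (Finset.mem_erase.mpr ⟨Ne.symm hil, Finset.mem_univ l⟩) hl
  have hrelint : ∀ i, ∃ z, z ∈ C ∧ f i z = 0 ∧ ∀ l, l ≠ i → 0 < f l z := by
    intro i
    have hex : ∀ l, ∃ y, y ∈ C ∧ f i y = 0 ∧ (l ≠ i → 0 < f l y) := by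
      intro l
      by_cases hl : l = i
      · exact ⟨0, by rw [hCmem]; intro m; simp, by simp, fun h => absurd hl h⟩
      · by_contra hcon
        push_neg at hcon
        have hsub : F i ⊆ (LinearMap.ker (f l) : Set (Fin n → ℝ)) := by
          intro y hy
          rw [hFmem] at hy
          have h1 := (hcon y hy.1 hy.2).2
          have h2 := (hCmem y).mp hy.1 l
          simpa [LinearMap.mem_ker] using le_antisymm h1 h2
        have hkk : LinearMap.ker (f i) ≤ LinearMap.ker (f l) := by
          rw [← hspanF i]
          exact Submodule.span_le.mpr hsub
        exact hnotprop l i hl (ker_le_ker_mult (hfne i) hkk)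
    choose y hyC hyi hypos using hex
    refine ⟨∑ l, y l, ?_, ?_, ?_⟩
    · rw [hCmem]; intro m; rw [map_sum]
      exact Finset.sum_nonneg fun l _ => (hCmem _).mp (hyC l) m
    · rw [map_sum]; exact Finset.sum_eq_zero fun l _ => hyi l
    · intro l hl
      rw [map_sum]
      exact Finset.sum_pos' (fun m _ => (hCmem _).mp (hyC m) l)
        ⟨l, Finset.mem_univ l, hypos l hl⟩
  obtain ⟨zj, hzjC, hzj0, hzjpos⟩ := hrelint j
  obtain ⟨zk, hzkC, hzk0, hzkpos⟩ := hrelint k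
  have hkerjk : ¬ LinearMap.ker (f j) ≤ LinearMap.ker (f k) := fun hle =>
    hnotprop k j (Ne.symm hjk) (ker_le_ker_mult (hfne j) hle)
  have hkerkj : ¬ LinearMap.ker (f k) ≤ LinearMap.ker (f j) := fun hle =>
    hnotprop j k hjk (ker_le_ker_mult (hfne k) hle)
  constructor
  · intro hlt
    by_contra hnex
    clear hkerjk hkerkj
    set w : (Fin p ⊕ Fin 2) → EuclideanSpace ℝ (Fin n) := Sum.elim
      (fun i => if i = j ∨ i = k then 0 else vecOf (f i))
      (fun b => if b = 0 then -vecOf (f j) else -vecOf (f k)) with hw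
    have hnotin : ¬ ∃ c : (Fin p ⊕ Fin 2) → ℝ, (∀ i, 0 ≤ c i) ∧
        vecOf (f j) + vecOf (f k) = ∑ i, c i • w i := by
      rintro ⟨c, hc0, hcsum⟩
      apply hnex
      refine ⟨fun i => if i = j then 1 + c (Sum.inr 0) else
        if i = k then 1 + c (Sum.inr 1) else c (Sum.inl i), ?_, ?_, ?_, ?_⟩
      · intro i hij hik
        simp only [if_neg hij, if_neg hik]
        exact hc0 _
      · simp only [eq_self_iff_true, if_true, if_pos rfl]
        linarith [hc0 (Sum.inr 0)]
      · simp only [if_neg (Ne.symm hjk), eq_self_iff_true, if_true, if_pos rfl]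
        linarith [hc0 (Sum.inr 1)]
      · apply LinearMap.ext
        intro x
        have hs := congrArg (fun z : EuclideanSpace ℝ (Fin n) =>
          ⟪z, (WithLp.toLp 2 x : EuclideanSpace ℝ (Fin n))⟫_ℝ) hcsum
        simp only [inner_add_left, sum_inner, real_inner_smul_left, inner_vecOf,
          Fintype.sum_sum_type, Fin.sum_univ_two, hw, Sum.elim_inl, Sum.elim_inr,
          apply_ite (fun z : EuclideanSpace ℝ (Fin n) =>
            ⟪z, (WithLp.toLp 2 x : EuclideanSpace ℝ (Fin n))⟫_ℝ),
          inner_zero_left, inner_neg_left, eq_self_iff_true, if_true, if_pos rfl,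
          if_neg (show (1 : Fin 2) ≠ 0 by decide), WithLp.ofLp_toLp] at hs
        have hsplit : ∑ i : Fin p, c (Sum.inl i) * (if i = j ∨ i = k then 0 else f i x)
            = ∑ i ∈ (Finset.univ.erase j).erase k, c (Sum.inl i) * f i x := by
          rw [← Finset.sum_subset
            (Finset.subset_univ ((Finset.univ.erase j).erase k)) ?_]
          · apply Finset.sum_congr rfl
            intro i hi
            rw [Finset.mem_erase, Finset.mem_erase] at hi
            rw [if_neg]
            push_neg
            exact ⟨hi.2.1, hi.1⟩
          · intro i _ hi
            by_cases hij : i = j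
            · rw [if_pos (Or.inl hij), mul_zero]
            · by_cases hik : i = k
              · rw [if_pos (Or.inr hik), mul_zero]
              · exact absurd (by
                  rw [Finset.mem_erase, Finset.mem_erase]
                  exact ⟨hik, hij, Finset.mem_univ i⟩) hi
        simp only [LinearMap.coe_sum, Finset.sum_apply, LinearMap.smul_apply,
          LinearMap.add_apply, smul_eq_mul, eq_self_iff_true, if_true, if_pos rfl,
          if_neg (Ne.symm hjk)]
        have hcong : ∑ i ∈ (Finset.univ.erase j).erase k,
            (if i = j then 1 + c (Sum.inr 0) else
              if i = k then 1 + c (Sum.inr 1) else c (Sum.inl i)) * f i x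
            = ∑ i ∈ (Finset.univ.erase j).erase k, c (Sum.inl i) * f i x := by
          apply Finset.sum_congr rfl
          intro i hi
          rw [Finset.mem_erase, Finset.mem_erase] at hi
          rw [if_neg hi.2.1, if_neg hi.1]
        rw [hcong, ← hsplit]
        linarith [hs]
    obtain ⟨y, hy1, hy2⟩ := cone_farkas w (vecOf (f j) + vecOf (f k)) hnotin
    have hyS : ∀ i, i ≠ j → i ≠ k → 0 ≤ f i y := by
      intro i hij hik
      have h := hy1 (Sum.inl i)
      simp only [hw, Sum.elim_inl] at h
      rw [if_neg (by push_neg; exact ⟨hij, hik⟩), inner_vecOf] at h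
      exact h
    have hyj : f j y ≤ 0 := by
      have h := hy1 (Sum.inr 0)
      simp only [hw, Sum.elim_inr, eq_self_iff_true, if_true, if_pos rfl,
        inner_neg_left, inner_vecOf] at h
      linarith
    have hyk : f k y ≤ 0 := by
      have h := hy1 (Sum.inr 1)
      simp only [hw, Sum.elim_inr, if_neg (show (1 : Fin 2) ≠ 0 by decide),
        inner_neg_left, inner_vecOf] at h
      linarith
    have hyjk : f j y + f k y < 0 := by
      rw [inner_add_left, inner_vecOf, inner_vecOf] at hy2
      exact hy2
    clear hy1 hy2 hnotin hnex
    obtain ⟨α, hαnn, hαdef⟩ : ∃ α : ℝ, 0 ≤ α ∧ α * f k zj = -(f k y) :=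
      ⟨-(f k y) / (f k zj), div_nonneg (by linarith) (hzjpos k (Ne.symm hjk)).le,
        div_mul_cancel₀ _ (hzjpos k (Ne.symm hjk)).ne'⟩
    obtain ⟨β, hβnn, hβdef⟩ : ∃ β : ℝ, 0 ≤ β ∧ β * f j zk = -(f j y) :=
      ⟨-(f j y) / (f j zk), div_nonneg (by linarith) (hzkpos j hjk).le,
        div_mul_cancel₀ _ (hzkpos j hjk).ne'⟩
    have hpos : 0 < α ∨ 0 < β := by
      rcases lt_or_ge (f j y) 0 with h | h
      · right
        by_contra hc
        push_neg at hc
        nlinarith [hzkpos j hjk]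
      · left
        have hky : f k y < 0 := by linarith
        by_contra hc
        push_neg at hc
        nlinarith [hzjpos k (Ne.symm hjk)]
    set y' : Fin n → ℝ := y.ofLp with hy'
    set wpt : Fin n → ℝ := α • zj + β • zk + y' with hwpt
    have hwj : f j wpt = 0 := by
      rw [hwpt]
      simp only [map_add, map_smul, smul_eq_mul, hzj0, mul_zero, zero_add]
      linarith [hβdef]
    have hwk : f k wpt = 0 := by
      rw [hwpt]
      simp only [map_add, map_smul, smul_eq_mul, hzk0, mul_zero, add_zero]
      linarith [hαdef]
    have hwS : ∀ i, i ≠ j → i ≠ k → 0 < f i wpt := by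
      intro i hij hik
      rw [hwpt]
      simp only [map_add, map_smul, smul_eq_mul]
      have h1 := hyS i hij hik
      have h2 := hzjpos i hij
      have h3 := hzkpos i hik
      rcases hpos with h4 | h4
      · nlinarith
      · nlinarith
    have hwC : wpt ∈ C := by
      rw [hCmem]; intro l
      by_cases hlj : l = j
      · subst hlj; exact le_of_eq hwj.symm
      · by_cases hlk : l = k
        · subst hlk; exact le_of_eq hwk.symm
        · exact (hwS l hlj hlk).le
    have hwG : wpt ∈ F j ∩ F k :=
      ⟨(hFmem j wpt).mpr ⟨hwC, hwj⟩, (hFmem k wpt).mpr ⟨hwC, hwk⟩⟩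
    have hWspan : LinearMap.ker (f j) ⊓ LinearMap.ker (f k) ≤
        Submodule.span ℝ (F j ∩ F k) := by
      intro u hu
      rw [Submodule.mem_inf] at hu
      have huj : f j u = 0 := hu.1
      have huk : f k u = 0 := hu.2
      obtain ⟨ε, hε, hεle⟩ : ∃ ε : ℝ, 0 < ε ∧
          ∀ i, i ≠ j → i ≠ k → 0 ≤ f i wpt + ε * f i u := by
        by_cases hS : ((Finset.univ.erase j).erase k).Nonempty
        · have hεpos : 0 < min 1 (((Finset.univ.erase j).erase k).inf' hS
              (fun i => f i wpt / (|f i u| + 1))) := by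
            apply lt_min one_pos
            rw [Finset.lt_inf'_iff]
            intro i hi
            rw [Finset.mem_erase, Finset.mem_erase] at hi
            exact div_pos (hwS i hi.2.1 hi.1) (by positivity)
          refine ⟨_, hεpos, ?_⟩
          intro i hij hik
          have hiS : i ∈ (Finset.univ.erase j).erase k := by
            rw [Finset.mem_erase, Finset.mem_erase]
            exact ⟨hik, hij, Finset.mem_univ i⟩
          have hle2 := le_trans (min_le_right 1 _) (Finset.inf'_le
            (fun i => f i wpt / (|f i u| + 1)) hiS)
          have hd : (0:ℝ) < |f i u| + 1 := by positivity
          have h1 := (le_div_iff₀ hd).mp hle2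
          have h2 : -|f i u| ≤ f i u := neg_abs_le _
          have h3 := mul_le_mul_of_nonneg_left h2 hεpos.le
          nlinarith [abs_nonneg (f i u)]
        · refine ⟨1, one_pos, fun i hij hik => ?_⟩
          exact absurd ⟨i, by
            rw [Finset.mem_erase, Finset.mem_erase]
            exact ⟨hik, hij, Finset.mem_univ i⟩⟩ hS
      have hC2 : wpt + ε • u ∈ C := by
        rw [hCmem]; intro l
        by_cases hlj : l = j
        · subst hlj
          rw [map_add, map_smul, hwj, huj]
          simp
        · by_cases hlk : l = k
          · subst hlk
            rw [map_add, map_smul, hwk, huk]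
            simp
          · have := hεle l hlj hlk
            rw [map_add, map_smul, smul_eq_mul]
            linarith
      have hmem2 : wpt + ε • u ∈ F j ∩ F k := by
        refine ⟨(hFmem j _).mpr ⟨hC2, ?_⟩, (hFmem k _).mpr ⟨hC2, ?_⟩⟩
        · rw [map_add, map_smul, hwj, huj]; simp
        · rw [map_add, map_smul, hwk, huk]; simp
      have hurep : u = ε⁻¹ • ((wpt + ε • u) - wpt) := by
        rw [add_sub_cancel_left, inv_smul_smul₀ hε.ne']
      rw [hurep]
      exact Submodule.smul_mem _ _ (Submodule.sub_mem _
        (Submodule.subset_span hmem2) (Submodule.subset_span hwG))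
    have h1 := Submodule.finrank_sup_add_finrank_inf_eq
      (LinearMap.ker (f j)) (LinearMap.ker (f k))
    have h2 : finrank ℝ ((LinearMap.ker (f j) ⊔ LinearMap.ker (f k)) :
        Submodule ℝ (Fin n → ℝ)) ≤ n := by
      have h3 := Submodule.finrank_le (LinearMap.ker (f j) ⊔ LinearMap.ker (f k))
      rwa [Module.finrank_pi, Fintype.card_fin] at h3
    have hmono := Submodule.finrank_mono hWspan
    have hfd : faceDim (F j ∩ F k) = finrank ℝ (Submodule.span ℝ (F j ∩ F k)) := rfl
    rw [hkerdim j, hkerdim k] at h1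
    omega
  · rintro ⟨lam, hlam0, hlamj, hlamk, heq⟩
    by_contra hge
    push_neg at hge
    set W : Submodule ℝ (Fin n → ℝ) := LinearMap.ker (f j) ⊓ LinearMap.ker (f k) with hW
    have hGW : Submodule.span ℝ (F j ∩ F k) ≤ W := by
      rw [Submodule.span_le]
      intro x hx
      refine Submodule.mem_inf.mpr ⟨?_, ?_⟩
      · simpa [LinearMap.mem_ker] using ((hFmem j x).mp hx.1).2
      · simpa [LinearMap.mem_ker] using ((hFmem k x).mp hx.2).2
    have hWlt : W < LinearMap.ker (f j) := by
      apply lt_of_le_of_ne inf_le_left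
      intro he
      exact hkerjk (he ▸ inf_le_right)
    have hWdim : finrank ℝ W < n - 1 := by
      have := Submodule.finrank_lt_finrank_of_lt hWlt
      rwa [hkerdim j] at this
    have hsp : Submodule.span ℝ (F j ∩ F k) = W := by
      apply Submodule.eq_of_le_of_finrank_le hGW
      have h2 : faceDim (F j ∩ F k) = finrank ℝ (Submodule.span ℝ (F j ∩ F k)) := rfl
      omega
    by_cases hex : ∃ i, i ≠ j ∧ i ≠ k ∧ 0 < lam i
    · obtain ⟨i, hij, hik, hlami⟩ := hex
      have hiS : i ∈ (Finset.univ.erase j).erase k := by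
        rw [Finset.mem_erase, Finset.mem_erase]
        exact ⟨hik, hij, Finset.mem_univ i⟩
      have hvanish : ∀ x ∈ F j ∩ F k, f i x = 0 := by
        intro x hx
        have hxC : x ∈ C := ((hFmem j x).mp hx.1).1
        have hxj : f j x = 0 := ((hFmem j x).mp hx.1).2
        have hxk : f k x = 0 := ((hFmem k x).mp hx.2).2
        have h := LinearMap.congr_fun heq x
        simp only [LinearMap.coe_sum, Finset.sum_apply, LinearMap.smul_apply,
          LinearMap.add_apply, smul_eq_mul, hxj, hxk, mul_zero, add_zero] at h
        have hterm := (Finset.sum_eq_zero_iff_of_nonneg ?_).mp h i hiS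
        · exact (mul_eq_zero.mp hterm).resolve_left (ne_of_gt hlami)
        · intro l hl
          rw [Finset.mem_erase, Finset.mem_erase] at hl
          exact mul_nonneg (hlam0 l hl.2.1 hl.1) ((hCmem x).mp hxC l)
      have hWker : W ≤ LinearMap.ker (f i) := by
        rw [← hsp]
        apply Submodule.span_le.mpr
        intro x hx
        simpa [LinearMap.mem_ker] using hvanish x hx
      obtain ⟨u₀, hu₀k, hu₀j⟩ : ∃ u₀, u₀ ∈ LinearMap.ker (f k) ∧ u₀ ∉ LinearMap.ker (f j) :=
        SetLike.not_le_iff_exists.mp hkerkj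
      obtain ⟨v₀, hv₀j, hv₀k⟩ : ∃ v₀, v₀ ∈ LinearMap.ker (f j) ∧ v₀ ∉ LinearMap.ker (f k) :=
        SetLike.not_le_iff_exists.mp hkerjk
      simp only [LinearMap.mem_ker] at hu₀k hu₀j hv₀j hv₀k
      clear hkerjk hkerkj
      set u : Fin n → ℝ := (f j u₀)⁻¹ • u₀ with hu
      set v : Fin n → ℝ := (f k v₀)⁻¹ • v₀ with hv
      have huj : f j u = 1 := by rw [hu, map_smul, smul_eq_mul, inv_mul_cancel₀ hu₀j]
      have huk : f k u = 0 := by rw [hu, map_smul, smul_eq_mul, hu₀k, mul_zero]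
      have hvj : f j v = 0 := by rw [hv, map_smul, smul_eq_mul, hv₀j, mul_zero]
      have hvk : f k v = 1 := by rw [hv, map_smul, smul_eq_mul, inv_mul_cancel₀ hv₀k]
      have ha : ∀ x, f i x = (f i u) * f j x + (f i v) * f k x := by
        intro x
        have hmem : x - f j x • u - f k x • v ∈ W := by
          refine Submodule.mem_inf.mpr ⟨?_, ?_⟩
          · simp [LinearMap.mem_ker, map_sub, map_smul, huj, hvj, smul_eq_mul]
          · simp [LinearMap.mem_ker, map_sub, map_smul, huk, hvk, smul_eq_mul]
        have hm := hWker hmem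
        simp only [LinearMap.mem_ker, map_sub, map_smul, smul_eq_mul] at hm
        linarith
      have hbpos : 0 < f i v := by
        have h1 := ha zj
        have h2 := hzjpos i hij
        have h3 := hzjpos k (Ne.symm hjk)
        rw [hzj0, mul_zero, zero_add] at h1
        nlinarith
      have hapos : 0 < f i u := by
        have h1 := ha zk
        have h2 := hzkpos i hik
        have h3 := hzkpos j hjk
        rw [hzk0, mul_zero, add_zero] at h1
        nlinarith
      apply hirred i
      refine ⟨fun m => if m = j then f i u else if m = k then f i v else 0, ?_, ?_⟩
      · intro m; dsimp only
        split
        · exact hapos.le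
        · split
          · exact hbpos.le
          · exact le_refl 0
      · have hsub : ({j, k} : Finset (Fin p)) ⊆ Finset.univ.erase i := by
          intro m hm
          rw [Finset.mem_insert, Finset.mem_singleton] at hm
          rcases hm with rfl | rfl
          · exact Finset.mem_erase.mpr ⟨Ne.symm hij, Finset.mem_univ _⟩
          · exact Finset.mem_erase.mpr ⟨Ne.symm hik, Finset.mem_univ _⟩
        rw [← Finset.sum_subset hsub ?_]
        · rw [Finset.sum_pair hjk]
          simp only [if_pos rfl, if_neg (Ne.symm hjk)]
          apply LinearMap.ext
          intro x
          simp only [LinearMap.add_apply, LinearMap.smul_apply, smul_eq_mul]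
          exact ha x
        · intro m _ hm
          rw [Finset.mem_insert, Finset.mem_singleton] at hm
          push_neg at hm
          simp [hm.1, hm.2]
    · push_neg at hex
      have hzero : ∀ i ∈ (Finset.univ.erase j).erase k, lam i • f i = 0 := by
        intro i hi
        rw [Finset.mem_erase, Finset.mem_erase] at hi
        have h1 := hlam0 i hi.2.1 hi.1
        have h2 := hex i hi.2.1 hi.1
        have : lam i = 0 := le_antisymm h2 h1
        rw [this, zero_smul]
      rw [Finset.sum_eq_zero hzero] at heq
      apply hnotprop j k hjk
      refine ⟨-(lam k / lam j), ?_⟩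
      have hadd : lam j • f j = -(lam k • f k) := eq_neg_of_add_eq_zero_left heq.symm
      calc f j = (lam j)⁻¹ • (lam j • f j) := (inv_smul_smul₀ hlamj.ne' _).symm
        _ = (lam j)⁻¹ • (-(lam k • f k)) := by rw [hadd]
        _ = (-(lam k / lam j)) • f k := by
            rw [smul_neg, smul_smul, ← neg_smul, div_eq_inv_mul]
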